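/- For all integers n and t with 0 < t < n and every natural number l, the single-exclusion number satisfies S(n,t) ≤ l + Σ_{i=1}^{t+1} binom(n,i)·(1 − i·binom(n−i, t−i+1)/binom(n,t))^l, where binom(a,b) denotes the binomial coefficient (equal to 0 when b < 0 or b > a). -/

import Mathlib

/-- An `(n,t)`-single-exclusion system: a collection of `t`-subsets (blocks) of an
`n`-set such that every subset `X` with `1 ≤ |X| ≤ t+1` has a block containing all
but exactly one element of `X`. -/
def IsSESystem (n t : ℕ) (S : Finset (Finset (Fin n))) : Prop :=
  (∀ B ∈ S, B.card = t) ∧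
  ∀ X : Finset (Fin n), 1 ≤ X.card → X.card ≤ t + 1 → ∃ B ∈ S, (X \ B).card = 1

/-- The `(n,t)`-single-exclusion number `S(n,t)`: the least number of blocks in an
`(n,t)`-single-exclusion system. -/
noncomputable def SENumber (n t : ℕ) : ℕ :=
  sInf {m : ℕ | ∃ S : Finset (Finset (Fin n)), IsSESystem n t S ∧ S.card = m}

open Finset in
lemma fix_exists (n t : ℕ) (htn : t < n) (X : Finset (Fin n))
    (h1 : 1 ≤ X.card) (h2 : X.card ≤ t + 1) :
    ∃ B ∈ Finset.powersetCard t (Finset.univ : Finset (Fin n)),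
      (X \ B).card = 1 := by
  obtain ⟨x, hx⟩ := Finset.card_pos.mp h1
  have hsub : X.erase x ⊆ Finset.univ.erase x := fun y hy =>
    Finset.mem_erase.mpr ⟨(Finset.mem_erase.mp hy).1, Finset.mem_univ y⟩
  have hcard : (X.erase x).card ≤ t := by
    have := Finset.card_erase_of_mem hx
    omega
  have hcard2 : t ≤ (Finset.univ.erase x : Finset (Fin n)).card := by
    rw [Finset.card_erase_of_mem (Finset.mem_univ x), Finset.card_univ,
      Fintype.card_fin]
    omega
  obtain ⟨B, hB1, hB2, hB3⟩ :=
    Finset.exists_subsuperset_card_eq hsub hcard hcard2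
  refine ⟨B, Finset.mem_powersetCard.mpr ⟨Finset.subset_univ B, hB3⟩, ?_⟩
  have : X \ B = {x} := by
    ext y
    simp only [Finset.mem_sdiff, Finset.mem_singleton]
    constructor
    · rintro ⟨hyX, hyB⟩
      by_contra hne
      exact hyB (hB1 (Finset.mem_erase.mpr ⟨hne, hyX⟩))
    · rintro rfl
      refine ⟨hx, fun hxB => ?_⟩
      exact (Finset.mem_erase.mp (hB2 hxB)).1 rfl
  rw [this, Finset.card_singleton]

open Finset in
lemma count_good (n t : ℕ) (X : Finset (Fin n))
    (h1 : 1 ≤ X.card) (h2 : X.card ≤ t + 1) :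
    ((Finset.powersetCard t (Finset.univ : Finset (Fin n))).filter
        (fun B => (X \ B).card = 1)).card
      = X.card * (n - X.card).choose (t + 1 - X.card) := by
  classical
  have key : ((Finset.powersetCard t (Finset.univ : Finset (Fin n))).filter
        (fun B => (X \ B).card = 1)).card
      = (X ×ˢ Finset.powersetCard (t + 1 - X.card)
          (Finset.univ \ X)).card := by
    refine Finset.card_bij'
      (fun B hB => (((X \ B).min' (Finset.card_pos.mp
        (by simp [(Finset.mem_filter.mp hB).2])) : Fin n), B \ X))
      (fun p _ => (X.erase p.1) ∪ p.2) ?_ ?_ ?_ ?_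
    · -- forward maps into product
      intro B hB
      obtain ⟨hBT, hB1⟩ := Finset.mem_filter.mp hB
      obtain ⟨-, hBcard⟩ := Finset.mem_powersetCard.mp hBT
      have hne : (X \ B).Nonempty := Finset.card_pos.mp (by simp [hB1])
      have hxmem : (X \ B).min' hne ∈ X \ B := Finset.min'_mem _ _
      refine Finset.mem_product.mpr ⟨(Finset.mem_sdiff.mp hxmem).1, ?_⟩
      refine Finset.mem_powersetCard.mpr ⟨fun y hy =>
        Finset.mem_sdiff.mpr ⟨Finset.mem_univ y, (Finset.mem_sdiff.mp hy).2⟩, ?_⟩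
      show (B \ X).card = t + 1 - X.card
      have e1 : (X ∩ B).card + (X \ B).card = X.card :=
        Finset.card_inter_add_card_sdiff X B
      have e2 : (B ∩ X).card + (B \ X).card = B.card :=
        Finset.card_inter_add_card_sdiff B X
      rw [Finset.inter_comm] at e2
      omega
    · -- backward maps into filter
      intro p hp
      obtain ⟨hpx, hpC⟩ := Finset.mem_product.mp hp
      obtain ⟨hC1, hC2⟩ := Finset.mem_powersetCard.mp hpC
      have hdisj : Disjoint (X.erase p.1) p.2 := by
        refine Finset.disjoint_left.mpr fun y hy hyC => ?_
        exact (Finset.mem_sdiff.mp (hC1 hyC)).2 (Finset.mem_of_mem_erase hy)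
      have hxnot : p.1 ∉ X.erase p.1 ∪ p.2 := by
        intro h
        rcases Finset.mem_union.mp h with h | h
        · exact (Finset.mem_erase.mp h).1 rfl
        · exact (Finset.mem_sdiff.mp (hC1 h)).2 hpx
      have hXdiff : X \ (X.erase p.1 ∪ p.2) = {p.1} := by
        ext y
        simp only [Finset.mem_sdiff, Finset.mem_union, Finset.mem_erase,
          Finset.mem_singleton]
        constructor
        · rintro ⟨hyX, hy⟩
          by_contra hne
          exact hy (Or.inl ⟨hne, hyX⟩)
        · rintro rfl
          refine ⟨hpx, ?_⟩
          rintro (⟨hne, -⟩ | h)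
          · exact hne rfl
          · exact (Finset.mem_sdiff.mp (hC1 h)).2 hpx
      refine Finset.mem_filter.mpr ⟨Finset.mem_powersetCard.mpr
        ⟨Finset.subset_univ _, ?_⟩, by rw [hXdiff]; simp⟩
      rw [Finset.card_union_of_disjoint hdisj, Finset.card_erase_of_mem hpx,
        hC2]
      omega
    · -- left inverse : j (i B) = B
      intro B hB
      obtain ⟨hBT, hB1⟩ := Finset.mem_filter.mp hB
      have hxmem : (X \ B).min' (Finset.card_pos.mp (by simp [hB1])) ∈ X \ B :=
        Finset.min'_mem _ _
      set x := (X \ B).min' (Finset.card_pos.mp (by simp [hB1])) with hxdef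
      have hXB : X \ B = {x} := by
        obtain ⟨a, ha⟩ := Finset.card_eq_one.mp hB1
        rw [ha] at hxmem ⊢
        rw [Finset.mem_singleton.mp hxmem]
      have hsub : X.erase x ⊆ B := by
        intro y hy
        obtain ⟨hne, hyX⟩ := Finset.mem_erase.mp hy
        by_contra hyB
        have : y ∈ X \ B := Finset.mem_sdiff.mpr ⟨hyX, hyB⟩
        rw [hXB] at this
        exact hne (Finset.mem_singleton.mp this)
      ext y
      simp only [Finset.mem_union, Finset.mem_erase, Finset.mem_sdiff]
      constructor
      · rintro (⟨hne, hyX⟩ | ⟨hyB, -⟩)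
        · exact hsub (Finset.mem_erase.mpr ⟨hne, hyX⟩)
        · exact hyB
      · intro hyB
        by_cases hyX : y ∈ X
        · left
          refine ⟨fun h => ?_, hyX⟩
          subst h
          exact (Finset.mem_sdiff.mp hxmem).2 hyB
        · exact Or.inr ⟨hyB, hyX⟩
    · -- right inverse : i (j p) = p
      intro p hp
      obtain ⟨hpx, hpC⟩ := Finset.mem_product.mp hp
      obtain ⟨hC1, hC2⟩ := Finset.mem_powersetCard.mp hpC
      have hxnot : p.1 ∉ X.erase p.1 ∪ p.2 := by
        intro h
        rcases Finset.mem_union.mp h with h | h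
        · exact (Finset.mem_erase.mp h).1 rfl
        · exact (Finset.mem_sdiff.mp (hC1 h)).2 hpx
      have hXdiff : X \ (X.erase p.1 ∪ p.2) = {p.1} := by
        ext y
        simp only [Finset.mem_sdiff, Finset.mem_union, Finset.mem_erase,
          Finset.mem_singleton]
        constructor
        · rintro ⟨hyX, hy⟩
          by_contra hne
          exact hy (Or.inl ⟨hne, hyX⟩)
        · rintro rfl
          refine ⟨hpx, ?_⟩
          rintro (⟨hne, -⟩ | h)
          · exact hne rfl
          · exact (Finset.mem_sdiff.mp (hC1 h)).2 hpx
      have hBdiff : (X.erase p.1 ∪ p.2) \ X = p.2 := by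
        ext y
        simp only [Finset.mem_sdiff, Finset.mem_union, Finset.mem_erase]
        constructor
        · rintro ⟨h | h, hyX⟩
          · exact absurd h.2 hyX
          · exact h
        · intro hy
          exact ⟨Or.inr hy, (Finset.mem_sdiff.mp (hC1 hy)).2⟩
      ext
      · simp only [hXdiff]
        exact congrArg Fin.val (Finset.min'_singleton p.1)
      · simp only [hBdiff]
  rw [key, Finset.card_product, Finset.card_powersetCard,
    Finset.card_sdiff_of_subset (Finset.subset_univ X), Finset.card_univ,
    Fintype.card_fin]

open Finset in
noncomputable def fixB (n t : ℕ) (htn : t < n) (X : Finset (Fin n)) :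
    Finset (Fin n) :=
  if h : 1 ≤ X.card ∧ X.card ≤ t + 1 then
    (fix_exists n t htn X h.1 h.2).choose else ∅

open Finset in
lemma fixB_spec (n t : ℕ) (htn : t < n) (X : Finset (Fin n))
    (h1 : 1 ≤ X.card) (h2 : X.card ≤ t + 1) :
    fixB n t htn X ∈ Finset.powersetCard t (Finset.univ : Finset (Fin n)) ∧
      (X \ fixB n t htn X).card = 1 := by
  rw [fixB, dif_pos ⟨h1, h2⟩]
  obtain ⟨hmem, hcard⟩ := (fix_exists n t htn X h1 h2).choose_spec
  exact ⟨hmem, hcard⟩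

open Finset in
theorem stmt1 (n t : ℕ) (ht : 0 < t) (htn : t < n) (l : ℕ) :
    (SENumber n t : ℝ) ≤ (l : ℝ) +
      ∑ i ∈ Finset.Icc 1 (t + 1),
        (n.choose i : ℝ) *
          (1 - (i * ((n - i).choose (t + 1 - i)) : ℝ) / (n.choose t : ℝ)) ^ l := by
  classical
  set T : Finset (Finset (Fin n)) :=
    Finset.powersetCard t (Finset.univ : Finset (Fin n)) with hT
  have hTcard : T.card = n.choose t := by
    rw [hT, Finset.card_powersetCard, Finset.card_univ, Fintype.card_fin]
  have hTpos : 0 < n.choose t := Nat.choose_pos htn.le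
  set 𝒳 : Finset (Finset (Fin n)) :=
    Finset.univ.filter (fun X => 1 ≤ X.card ∧ X.card ≤ t + 1) with hXdef
  set g : ℕ → ℕ := fun i => i * (n - i).choose (t + 1 - i) with hg
  -- counting good blocks for X ∈ 𝒳
  have hGX : ∀ X ∈ 𝒳, (T.filter (fun B => (X \ B).card = 1)).card = g X.card := by
    intro X hX
    obtain ⟨-, h1, h2⟩ := Finset.mem_filter.mp hX
    exact count_good n t X h1 h2
  have hgle : ∀ i ∈ Finset.Icc 1 (t + 1), g i ≤ n.choose t := by
    intro i hi
    obtain ⟨hi1, hi2⟩ := Finset.mem_Icc.mp hi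
    have hin : i ≤ n := by omega
    obtain ⟨X, hXmem⟩ : (Finset.powersetCard i (Finset.univ : Finset (Fin n))).Nonempty := by
      rw [Finset.powersetCard_nonempty]
      simpa using hin
    obtain ⟨-, hXcard⟩ := Finset.mem_powersetCard.mp hXmem
    have hX𝒳 : X ∈ 𝒳 := Finset.mem_filter.mpr ⟨Finset.mem_univ X, by omega, by omega⟩
    have := hGX X hX𝒳
    rw [hXcard] at this
    calc g i = (T.filter (fun B => (X \ B).card = 1)).card := this.symm
      _ ≤ T.card := Finset.card_filter_le _ _
      _ = n.choose t := hTcard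
  -- the probability space
  set Ω : Finset (Fin l → Finset (Fin n)) := Fintype.piFinset (fun _ => T) with hΩ
  have hΩcard : Ω.card = (n.choose t) ^ l := by
    rw [hΩ, Fintype.card_piFinset]
    simp [hTcard]
  obtain ⟨B₀, hB₀⟩ : T.Nonempty := by
    rw [hT, Finset.powersetCard_nonempty]
    simp [htn.le]
  have hΩne : Ω.Nonempty := ⟨fun _ => B₀, by simp [hΩ, Fintype.mem_piFinset, hB₀]⟩
  -- double counting
  set badSet : (Fin l → Finset (Fin n)) → Finset (Finset (Fin n)) :=
    fun ω => 𝒳.filter (fun X => ∀ j, (X \ ω j).card ≠ 1) with hbadSet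
  have hdouble : ∑ ω ∈ Ω, (badSet ω).card
      = ∑ X ∈ 𝒳, (Ω.filter (fun ω => ∀ j, (X \ ω j).card ≠ 1)).card := by
    simp only [hbadSet, Finset.card_filter]
    rw [Finset.sum_comm]
  have hfiber : ∀ X ∈ 𝒳,
      (Ω.filter (fun ω => ∀ j, (X \ ω j).card ≠ 1)).card
        = (n.choose t - g X.card) ^ l := by
    intro X hX
    have heq : Ω.filter (fun ω => ∀ j, (X \ ω j).card ≠ 1)
        = Fintype.piFinset (fun _ : Fin l => T.filter (fun B => (X \ B).card ≠ 1)) := by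
      ext ω
      simp only [Finset.mem_filter, hΩ, Fintype.mem_piFinset]
      exact ⟨fun ⟨a, b⟩ j => ⟨a j, b j⟩, fun h => ⟨fun j => (h j).1, fun j => (h j).2⟩⟩
    rw [heq, Fintype.card_piFinset]
    have hsplit : (T.filter (fun B => (X \ B).card ≠ 1)).card
        = n.choose t - g X.card := by
      have h0 := Finset.card_filter_add_card_filter_not
        (s := T) (p := fun B => (X \ B).card = 1)
      beta_reduce at h0
      rw [hGX X hX] at h0
      simp only [ne_eq]
      rw [hTcard] at h0
      exact Nat.eq_sub_of_add_eq' h0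
    simp [hsplit]
  -- group 𝒳 by cardinality
  have hXbiUnion : 𝒳 = (Finset.Icc 1 (t + 1)).biUnion
      (fun i => Finset.powersetCard i (Finset.univ : Finset (Fin n))) := by
    ext X
    simp only [hXdef, Finset.mem_filter, Finset.mem_biUnion, Finset.mem_Icc,
      Finset.mem_powersetCard, Finset.mem_univ, true_and]
    constructor
    · rintro ⟨h1, h2⟩
      exact ⟨X.card, ⟨h1, h2⟩, Finset.subset_univ X, rfl⟩
    · rintro ⟨i, ⟨h1, h2⟩, -, rfl⟩
      exact ⟨h1, h2⟩
  have hgroup : ∑ X ∈ 𝒳, (n.choose t - g X.card) ^ l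
      = ∑ i ∈ Finset.Icc 1 (t + 1), n.choose i * (n.choose t - g i) ^ l := by
    rw [hXbiUnion, Finset.sum_biUnion]
    · refine Finset.sum_congr rfl fun i _ => ?_
      have : ∀ X ∈ Finset.powersetCard i (Finset.univ : Finset (Fin n)),
          (n.choose t - g X.card) ^ l = (n.choose t - g i) ^ l := by
        intro X hX
        rw [(Finset.mem_powersetCard.mp hX).2]
      rw [Finset.sum_congr rfl this, Finset.sum_const, Finset.card_powersetCard,
        Finset.card_univ, Fintype.card_fin, smul_eq_mul]
    · intro i hi j hj hij
      refine Finset.disjoint_left.mpr fun X hXi hXj => ?_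
      exact hij ((Finset.mem_powersetCard.mp hXi).2.symm.trans
        (Finset.mem_powersetCard.mp hXj).2)
  -- choose a minimizing ω
  obtain ⟨ω, hωΩ, hωmin⟩ := Finset.exists_min_image Ω (fun ω => (badSet ω).card) hΩne
  have havg : Ω.card * (badSet ω).card ≤ ∑ ω' ∈ Ω, (badSet ω').card := by
    simpa using Finset.card_nsmul_le_sum Ω _ _ (fun ω' hω' => hωmin ω' hω')
  have hkey : (n.choose t) ^ l * (badSet ω).card
      ≤ ∑ i ∈ Finset.Icc 1 (t + 1), n.choose i * (n.choose t - g i) ^ l := by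
    rw [← hΩcard, ← hgroup]
    calc Ω.card * (badSet ω).card ≤ ∑ ω' ∈ Ω, (badSet ω').card := havg
      _ = ∑ X ∈ 𝒳, (Ω.filter (fun ω => ∀ j, (X \ ω j).card ≠ 1)).card := hdouble
      _ = ∑ X ∈ 𝒳, (n.choose t - g X.card) ^ l := Finset.sum_congr rfl hfiber
  -- construct the SE system
  set S : Finset (Finset (Fin n)) :=
    Finset.image ω Finset.univ ∪ Finset.image (fixB n t htn) (badSet ω) with hS
  have hωT : ∀ j, ω j ∈ T := fun j => (Fintype.mem_piFinset.mp hωΩ) j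
  have hSE : IsSESystem n t S := by
    constructor
    · intro B hB
      rcases Finset.mem_union.mp hB with hB | hB
      · obtain ⟨j, -, rfl⟩ := Finset.mem_image.mp hB
        exact (Finset.mem_powersetCard.mp (hωT j)).2
      · obtain ⟨X, hX, rfl⟩ := Finset.mem_image.mp hB
        obtain ⟨hX𝒳, -⟩ := Finset.mem_filter.mp hX
        obtain ⟨-, h1, h2⟩ := Finset.mem_filter.mp hX𝒳
        exact (Finset.mem_powersetCard.mp (fixB_spec n t htn X h1 h2).1).2
    · intro X h1 h2
      by_cases hgood : ∃ j, (X \ ω j).card = 1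
      · obtain ⟨j, hj⟩ := hgood
        exact ⟨ω j, Finset.mem_union_left _
          (Finset.mem_image.mpr ⟨j, Finset.mem_univ j, rfl⟩), hj⟩
      · push_neg at hgood
        have hXbad : X ∈ badSet ω :=
          Finset.mem_filter.mpr ⟨Finset.mem_filter.mpr
            ⟨Finset.mem_univ X, h1, h2⟩, hgood⟩
        exact ⟨fixB n t htn X, Finset.mem_union_right _
          (Finset.mem_image_of_mem _ hXbad), (fixB_spec n t htn X h1 h2).2⟩
  have hScard : S.card ≤ l + (badSet ω).card := by
    calc S.card ≤ (Finset.image ω Finset.univ).card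
          + (Finset.image (fixB n t htn) (badSet ω)).card := Finset.card_union_le _ _
      _ ≤ l + (badSet ω).card :=
        Nat.add_le_add (by simpa using Finset.card_image_le (f := ω) (s := Finset.univ))
          Finset.card_image_le
  have hSEle : SENumber n t ≤ S.card := Nat.sInf_le ⟨S, hSE, rfl⟩
  -- final real inequality
  have hc0 : ((n.choose t : ℕ) : ℝ) ≠ 0 := by positivity
  have hpow : (0 : ℝ) < ((n.choose t : ℕ) : ℝ) ^ l := by positivity
  have hcast : ((n.choose t : ℕ) : ℝ) ^ l * ((badSet ω).card : ℝ)
      ≤ ∑ i ∈ Finset.Icc 1 (t + 1),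
          (n.choose i : ℝ) * (((n.choose t - g i : ℕ)) : ℝ) ^ l := by
    exact_mod_cast hkey
  have hb : ((badSet ω).card : ℝ)
      ≤ ∑ i ∈ Finset.Icc 1 (t + 1),
          (n.choose i : ℝ) *
            (1 - (i * ((n - i).choose (t + 1 - i)) : ℝ) / (n.choose t : ℝ)) ^ l := by
    calc ((badSet ω).card : ℝ)
        ≤ (∑ i ∈ Finset.Icc 1 (t + 1),
            (n.choose i : ℝ) * (((n.choose t - g i : ℕ)) : ℝ) ^ l)
          / ((n.choose t : ℕ) : ℝ) ^ l := (le_div_iff₀' hpow).mpr hcast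
      _ = _ := by
          rw [Finset.sum_div]
          refine Finset.sum_congr rfl fun i hi => ?_
          rw [Nat.cast_sub (hgle i hi), mul_div_assoc, ← div_pow, sub_div,
            div_self hc0]
          simp only [hg]
          push_cast
          ring
  calc (SENumber n t : ℝ)
      ≤ ((l + (badSet ω).card : ℕ) : ℝ) := by exact_mod_cast hSEle.trans hScard
    _ = (l : ℝ) + ((badSet ω).card : ℝ) := by push_cast; ring
    _ ≤ _ := (add_le_add_iff_left _).mpr hb
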